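/- Every periodic group admitting a faithful representation by n×n tropical matrices is finite; that is, if 𝒢 is a group in which every element has finite order and there exists an injective map φ : 𝒢 → 𝕋^{n×n} with φ(gh) = φ(g) ⊗ φ(h) for all g, h ∈ 𝒢, then 𝒢 is finite. -/

import Mathlib

/-- The tropical (max-plus) semiring carrier: `ℝ ∪ {-∞}`, with `⊥` playing the
role of `-∞`. -/
abbrev Trop : Type := WithBot ℝ

/-- Tropical matrix multiplication: `(A ⊗ B) i j = max_k (A i k + B k j)`. -/
def tropMulMat {n m p : ℕ} (A : Matrix (Fin n) (Fin m) Trop)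
    (B : Matrix (Fin m) (Fin p) Trop) : Matrix (Fin n) (Fin p) Trop :=
  fun i j => Finset.univ.sup fun k => A i k + B k j

set_option maxHeartbeats 1000000

namespace TP

lemma sup_add {κ : Type*} (s : Finset κ) (f : κ → Trop) (c : Trop) :
    s.sup f + c = s.sup fun k => f k + c := by
  induction s using Finset.cons_induction with
  | empty => simp
  | cons a s ha ih =>
    rw [Finset.sup_cons, Finset.sup_cons, ← ih]
    rcases le_total (f a) (s.sup f) with h | h
    · rw [sup_eq_right.2 h, sup_eq_right.2 (add_le_add_left h c)]
    · rw [sup_eq_left.2 h, sup_eq_left.2 (add_le_add_left h c)]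

lemma add_sup {κ : Type*} (s : Finset κ) (f : κ → Trop) (c : Trop) :
    c + s.sup f = s.sup fun k => c + f k := by
  induction s using Finset.cons_induction with
  | empty => simp
  | cons a s ha ih =>
    rw [Finset.sup_cons, Finset.sup_cons, ← ih]
    rcases le_total (f a) (s.sup f) with h | h
    · rw [sup_eq_right.2 h, sup_eq_right.2 (add_le_add_right h c)]
    · rw [sup_eq_left.2 h, sup_eq_left.2 (add_le_add_right h c)]

variable {ι : Type*} [Fintype ι]

def tmul (A B : ι → ι → Trop) : ι → ι → Trop :=
  fun i j => Finset.univ.sup fun k => A i k + B k j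

lemma tmul_le (A B : ι → ι → Trop) (i j k : ι) : A i k + B k j ≤ tmul A B i j :=
  Finset.le_sup (f := fun k => A i k + B k j) (Finset.mem_univ k)

lemma tmul_le_of (A B : ι → ι → Trop) {i j} {x : Trop} (h : ∀ k, A i k + B k j ≤ x) :
    tmul A B i j ≤ x := Finset.sup_le fun k _ => h k

lemma exists_eq_sup_of_ne_bot {κ : Type*} [Fintype κ] {f : κ → Trop}
    (h : Finset.univ.sup f ≠ ⊥) : ∃ k, f k = Finset.univ.sup f := by
  have hne : (Finset.univ : Finset κ).Nonempty := by
    rcases (Finset.univ (α := κ)).eq_empty_or_nonempty with he | hne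
    · rw [he] at h; simp at h
    · exact hne
  obtain ⟨b, _, hb⟩ := Finset.exists_mem_eq_sup Finset.univ hne f
  exact ⟨b, hb.symm⟩

lemma tmul_attain {A B : ι → ι → Trop} {i j} (h : tmul A B i j ≠ ⊥) :
    ∃ k, A i k + B k j = tmul A B i j := exists_eq_sup_of_ne_bot h

lemma tmul_assoc (A B C : ι → ι → Trop) : tmul (tmul A B) C = tmul A (tmul B C) := by
  funext i j
  show Finset.univ.sup (fun l => (tmul A B) i l + C l j)
      = Finset.univ.sup (fun k => A i k + (tmul B C) k j)
  simp only [tmul, sup_add, add_sup]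
  rw [Finset.sup_comm]
  congr 1; funext k; congr 1; funext l; rw [add_assoc]

lemma tmul_bot_iff (A B : ι → ι → Trop) (i j) :
    tmul A B i j = ⊥ ↔ ∀ k, A i k = ⊥ ∨ B k j = ⊥ := by
  simp [tmul, Finset.sup_eq_bot_iff, WithBot.add_eq_bot]

lemma tmul_ne_bot_iff (A B : ι → ι → Trop) (i j) :
    tmul A B i j ≠ ⊥ ↔ ∃ k, A i k ≠ ⊥ ∧ B k j ≠ ⊥ := by
  rw [Ne, tmul_bot_iff]; push_neg; rfl


lemma unbot' {x : Trop} (h : x ≠ ⊥) : ∃ r : ℝ, x = (r : Trop) := by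
  rcases WithBot.ne_bot_iff_exists.1 h with ⟨r, hr⟩; exact ⟨r, hr.symm⟩

lemma ne_bot_of_le {x y : Trop} (h : x ≤ y) (hx : x ≠ ⊥) : y ≠ ⊥ := by
  intro hy; rw [hy, le_bot_iff] at h; exact hx h

lemma add_ne_bot {x y : Trop} (hx : x ≠ ⊥) (hy : y ≠ ⊥) : x + y ≠ ⊥ := by
  rw [Ne, WithBot.add_eq_bot]; tauto



lemma coe_add_le_cancel {e : ℝ} {y : Trop} (h : (e : Trop) ≤ (e : Trop) + y) : (0:Trop) ≤ y := by
  cases y using WithBot.recBotCoe with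
  | bot => rw [WithBot.add_bot] at h; exact absurd (le_bot_iff.1 h) (WithBot.coe_ne_bot)
  | coe r =>
    rw [← WithBot.coe_add, WithBot.coe_le_coe] at h
    rw [← WithBot.coe_zero, WithBot.coe_le_coe]
    linarith

lemma diag_witness {E : ι → ι → Trop} (hE : tmul E E = E) {i j : ι} (hij : E i j ≠ ⊥) :
    ∃ d, E d d = 0 ∧ E i d + E d j = E i j := by
  classical
  have htr : ∀ a b c0 : ι, E a b + E b c0 ≤ E a c0 := by
    intro a b c0
    conv_rhs => rw [← hE]
    exact tmul_le _ _ _ _ _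
  set K : ι → Prop := fun k => E i k + E k j = E i j ∧ E i k ≠ ⊥ with hKdef
  have hk0 : ∃ k, K k := by
    have h1 : tmul E E i j ≠ ⊥ := by rw [hE]; exact hij
    obtain ⟨k, hk⟩ := tmul_attain h1
    rw [hE] at hk
    refine ⟨k, hk, ?_⟩
    intro hb; rw [hb, WithBot.bot_add] at hk; exact hij hk.symm
  have step : ∀ s : {k // K k}, ∃ t : {k // K k}, E i t.1 + E t.1 s.1 = E i s.1 := by
    rintro ⟨k, hkK, hkne⟩
    have h1 : tmul E E i k ≠ ⊥ := by rw [hE]; exact hkne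
    obtain ⟨l, hl⟩ := tmul_attain h1
    rw [hE] at hl
    have hlne : E i l ≠ ⊥ := by
      intro hb; rw [hb, WithBot.bot_add] at hl; exact hkne hl.symm
    have hlK : K l := by
      constructor
      · refine le_antisymm (htr i l j) ?_
        calc E i j = (E i k) + E k j := hkK.symm
        _ = (E i l + E l k) + E k j := by rw [hl]
        _ = E i l + (E l k + E k j) := add_assoc _ _ _
        _ ≤ E i l + E l j := add_le_add_right (htr l k j) _
      · exact hlne
    exact ⟨⟨l, hlK⟩, hl⟩
  choose st hst using step
  obtain ⟨s0⟩ : Nonempty {k // K k} := by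
    obtain ⟨k, hk⟩ := hk0; exact ⟨⟨k, hk⟩⟩
  set u : ℕ → {k // K k} := fun t => st^[t] s0 with hu
  have hrel : ∀ t, E i (u (t+1)).1 + E (u (t+1)).1 (u t).1 = E i (u t).1 := by
    intro t
    have : u (t + 1) = st (u t) := by rw [hu]; simp [Function.iterate_succ_apply']
    rw [this]; exact hst (u t)
  have claim : ∀ s : ℕ, 1 ≤ s → ∀ t : ℕ,
      E i (u t).1 ≤ E i (u (t+s)).1 + E (u (t+s)).1 (u t).1 := by
    intro s hs
    induction s, hs using Nat.le_induction with
    | base => intro t; exact le_of_eq (hrel t).symm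
    | succ s hs ih =>
      intro t
      have h1 : E (u (t+(s+1))).1 (u (t+s)).1 + E (u (t+s)).1 (u t).1
          ≤ E (u (t+(s+1))).1 (u t).1 := htr _ _ _
      have h2 : E i (u (t+(s+1))).1 + E (u (t+(s+1))).1 (u (t+s)).1 = E i (u (t+s)).1 := by
        have := hrel (t+s)
        rw [show t + s + 1 = t + (s+1) by ring] at this
        exact this
      calc E i (u t).1 ≤ E i (u (t+s)).1 + E (u (t+s)).1 (u t).1 := ih t
      _ = (E i (u (t+(s+1))).1 + E (u (t+(s+1))).1 (u (t+s)).1) + E (u (t+s)).1 (u t).1 := by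
            rw [h2]
      _ = E i (u (t+(s+1))).1 + (E (u (t+(s+1))).1 (u (t+s)).1 + E (u (t+s)).1 (u t).1) :=
            add_assoc _ _ _
      _ ≤ E i (u (t+(s+1))).1 + E (u (t+(s+1))).1 (u t).1 := add_le_add_right h1 _
  have main : ∀ p q : ℕ, p < q → (u p).1 = (u q).1 →
      ∃ d, E d d = 0 ∧ E i d + E d j = E i j := by
    intro p q hlt hfeq
    set d : ι := (u p).1 with hd
    obtain ⟨e, he⟩ := unbot' (u p).2.2
    have h2 := claim (q - p) (by omega) p
    rw [show p + (q - p) = q by omega] at h2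
    rw [← hfeq, ← hd, he] at h2
    have hge : (0:Trop) ≤ E d d := coe_add_le_cancel h2
    have hne : E d d ≠ ⊥ := by
      intro hb; rw [hb, le_bot_iff, ← WithBot.coe_zero] at hge
      exact (WithBot.coe_ne_bot (a := (0:ℝ))) hge
    obtain ⟨r, hr⟩ := unbot' hne
    have hle : E d d + E d d ≤ E d d := htr d d d
    rw [hr, ← WithBot.coe_add, WithBot.coe_le_coe] at hle
    have hge' : (0:ℝ) ≤ r := by
      rw [hr, ← WithBot.coe_zero, WithBot.coe_le_coe] at hge; exact hge
    have : r = 0 := by linarith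
    refine ⟨d, ?_, (u p).2.1⟩
    rw [hr, this, WithBot.coe_zero]
  obtain ⟨p, q, hpq, hfeq⟩ := Finite.exists_ne_map_eq_of_infinite (fun t => (u t).1)
  rcases lt_or_gt_of_ne hpq with hlt | hgt
  · exact main p q hlt hfeq
  · exact main q p hgt hfeq.symm

section Group

variable {G : Type*} [Group G] (ψ : G → ι → ι → Trop)

lemma supp_tmul_congr {A A' B B' : ι → ι → Trop}
    (hA : ∀ i j, A i j = ⊥ ↔ A' i j = ⊥) (hB : ∀ i j, B i j = ⊥ ↔ B' i j = ⊥) :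
    ∀ i j, tmul A B i j = ⊥ ↔ tmul A' B' i j = ⊥ := by
  intro i j
  rw [tmul_bot_iff, tmul_bot_iff]
  exact forall_congr' fun k => or_congr (hA i k) (hB k j)

variable (hmul : ∀ g h : G, ψ (g * h) = tmul (ψ g) (ψ h))
include hmul

section
variable (hdiag : ∀ i, ψ 1 i i = 0)
include hdiag

lemma row_shift (g : G) (i : ι) :
    ∃ k, ψ g i k + ψ g⁻¹ k i = 0 ∧ ∀ j, ψ g i j = ψ g i k + ψ 1 k j := by
  have h1 : tmul (ψ g) (ψ g⁻¹) = ψ 1 := by rw [← hmul, mul_inv_cancel]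
  have h2 : tmul (ψ g⁻¹) (ψ g) = ψ 1 := by rw [← hmul, inv_mul_cancel]
  have h3 : tmul (ψ g) (ψ 1) = ψ g := by rw [← hmul, mul_one]
  have hne : tmul (ψ g) (ψ g⁻¹) i i ≠ ⊥ := by
    rw [h1, hdiag i]; exact WithBot.coe_ne_bot (a := (0:ℝ))
  obtain ⟨k, hk⟩ := tmul_attain hne
  rw [h1, hdiag i] at hk
  refine ⟨k, hk, fun j => le_antisymm ?_ ?_⟩
  · have h4 : ψ g⁻¹ k i + ψ g i j ≤ ψ 1 k j := by
      rw [← h2]; exact tmul_le _ _ _ _ _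
    calc ψ g i j = 0 + ψ g i j := by rw [zero_add]
    _ = ψ g i k + ψ g⁻¹ k i + ψ g i j := by rw [hk]
    _ = ψ g i k + (ψ g⁻¹ k i + ψ g i j) := add_assoc _ _ _
    _ ≤ ψ g i k + ψ 1 k j := add_le_add_right h4 _
  · conv_rhs => rw [← h3]
    exact tmul_le _ _ _ _ _

omit hdiag in
lemma supp_pow (g : G) (hs : ∀ i j, ψ g i j = ⊥ ↔ ψ 1 i j = ⊥) :
    ∀ t : ℕ, 1 ≤ t → ∀ i j, ψ (g ^ t) i j = ⊥ ↔ ψ 1 i j = ⊥ := by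
  have hFF : tmul (ψ 1) (ψ 1) = ψ 1 := by rw [← hmul, one_mul]
  intro t ht
  induction t, ht using Nat.le_induction with
  | base => simpa [pow_one] using hs
  | succ t ht ih =>
    intro i j
    rw [pow_succ, hmul]
    rw [supp_tmul_congr ih hs i j, hFF]

omit hdiag in
lemma pow_diag_ge (g : G) (i : ι) (r : ℝ) (hr : ψ g i i = (r : Trop)) :
    ∀ t : ℕ, 1 ≤ t → ((t * r : ℝ) : Trop) ≤ ψ (g ^ t) i i := by
  intro t ht
  induction t, ht using Nat.le_induction with
  | base => rw [pow_one, hr]; norm_num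
  | succ t ht ih =>
    rw [pow_succ, hmul]
    have hc : ((((t+1 : ℕ) : ℝ) * r : ℝ) : Trop) = ((((t:ℕ) : ℝ) * r : ℝ) : Trop) + (r : Trop) := by
      rw [← WithBot.coe_add]
      congr 1
      push_cast
      ring
    rw [hc]
    exact le_trans (add_le_add ih (le_of_eq hr.symm)) (tmul_le _ _ i i i)

lemma diag_nonpos (g : G) (m : ℕ) (hm : 1 ≤ m) (hgm : g ^ m = 1)
    (i : ι) (r : ℝ) (hr : ψ g i i = (r : Trop)) : r ≤ 0 := by
  have h := pow_diag_ge ψ hmul g i r hr m hm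
  rw [hgm, hdiag i] at h
  have h2 : (m : ℝ) * r ≤ 0 := by exact_mod_cast h
  have hm' : (1:ℝ) ≤ (m:ℝ) := by exact_mod_cast hm
  nlinarith

omit hdiag in
lemma pow_upper (g : G) (e : ι → ℝ)
    (he : ∀ i j, ψ g i j = ψ 1 i j + ((e i : ℝ) : Trop)) (hneg : ∀ i, e i ≤ 0) :
    ∀ t : ℕ, 1 ≤ t → ∀ i j, ψ (g ^ t) i j ≤ ψ 1 i j + ((e i : ℝ) : Trop) := by
  have hFF : tmul (ψ 1) (ψ 1) = ψ 1 := by rw [← hmul, one_mul]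
  intro t ht
  induction t, ht using Nat.le_induction with
  | base => intro i j; rw [pow_one]; exact le_of_eq (he i j)
  | succ t ht ih =>
    intro i j
    rw [pow_succ, hmul]
    refine tmul_le_of _ _ fun k => ?_
    calc ψ (g ^ t) i k + ψ g k j ≤ (ψ 1 i k + (e i : Trop)) + (ψ 1 k j + (e k : Trop)) :=
          add_le_add (ih i k) (le_of_eq (he k j))
    _ = ((ψ 1 i k + ψ 1 k j) + (e i : Trop)) + (e k : Trop) := by
          rw [add_assoc, add_assoc, add_assoc]; congr 1
          rw [← add_assoc, ← add_assoc]
          rw [add_comm ((e i : ℝ) : Trop) (ψ 1 k j)]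
    _ ≤ ((ψ 1 i k + ψ 1 k j) + (e i : Trop)) + (0 : Trop) := by
          refine add_le_add_right ?_ _
          exact_mod_cast WithBot.coe_le_coe.2 (hneg k)
    _ = (ψ 1 i k + ψ 1 k j) + (e i : Trop) := by rw [add_zero]
    _ ≤ tmul (ψ 1) (ψ 1) i j + (e i : Trop) := add_le_add_left (tmul_le _ _ _ _ _) _
    _ = ψ 1 i j + (e i : Trop) := by rw [hFF]

lemma rigid (g : G) (m : ℕ) (hm : 1 ≤ m) (hgm : g ^ m = 1) (e : ι → ℝ)
    (he : ∀ i j, ψ g i j = ψ 1 i j + ((e i : ℝ) : Trop)) : ψ g = ψ 1 := by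
  have hdg : ∀ i, ψ g i i = ((e i : ℝ) : Trop) := by
    intro i; rw [he i i, hdiag i, zero_add]
  have hneg : ∀ i, e i ≤ 0 := fun i =>
    diag_nonpos ψ hmul hdiag g m hm hgm i (e i) (hdg i)
  have hpos : ∀ i, 0 ≤ e i := by
    intro i
    have h := pow_upper ψ hmul g e he hneg m hm i i
    rw [hgm, hdiag i, zero_add] at h
    exact_mod_cast h
  funext i j
  rw [he i j]
  have : e i = 0 := le_antisymm (hneg i) (hpos i)
  rw [this]
  norm_num


lemma entry_bounds (fmin fmax : ℝ)
    (hfmin : ∀ i j, ψ 1 i j ≠ ⊥ → ((fmin : ℝ) : Trop) ≤ ψ 1 i j)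
    (hfmax : ∀ i j, ψ 1 i j ≠ ⊥ → ψ 1 i j ≤ ((fmax : ℝ) : Trop))
    (g : G) (m : ℕ) (hm : 1 ≤ m) (hgm : g ^ m = 1)
    (hs : ∀ i j, ψ g i j = ⊥ ↔ ψ 1 i j = ⊥) :
    ∀ i j, ψ 1 i j ≠ ⊥ →
      ((3*fmin - 2*fmax : ℝ) : Trop) ≤ ψ g i j ∧ ψ g i j ≤ ((fmax - fmin : ℝ) : Trop) := by
  classical
  have hdne : ∀ i, ψ 1 i i ≠ ⊥ := by
    intro i; rw [hdiag i]; exact WithBot.coe_ne_bot (a := (0:ℝ))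
  have hFF : tmul (ψ 1) (ψ 1) = ψ 1 := by rw [← hmul, one_mul]
  have htrans : ∀ a b c_1 : ι, ψ 1 a b ≠ ⊥ → ψ 1 b c_1 ≠ ⊥ → ψ 1 a c_1 ≠ ⊥ := by
    intro a b c1 h1 h2
    have : ψ 1 a b + ψ 1 b c1 ≤ ψ 1 a c1 := by
      conv_rhs => rw [← hFF]
      exact tmul_le _ _ _ _ _
    exact ne_bot_of_le this (add_ne_bot h1 h2)
  -- row data
  choose k hk hrow using row_shift ψ hmul hdiag g
  have hckne : ∀ i, ψ g i (k i) ≠ ⊥ := by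
    intro i hb
    have := hk i
    rw [hb, WithBot.bot_add] at this
    exact (WithBot.coe_ne_bot (a := (0:ℝ))) this.symm
  choose c hc using fun i => unbot' (hckne i)
  -- the value of F (k i) i
  have hfk : ∀ i, ψ 1 (k i) i ≠ ⊥ := by
    intro i hb
    have hgi : ψ g i i ≠ ⊥ := fun h => hdne i ((hs i i).1 h)
    rw [hrow i i, hb, WithBot.add_bot] at hgi
    exact hgi rfl
  choose fk hfkv using fun i => unbot' (hfk i)
  -- c i + fk i ≤ 0
  have hdiagval : ∀ i, ψ g i i = ((c i + fk i : ℝ) : Trop) := by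
    intro i; rw [hrow i i, hc i, hfkv i, ← WithBot.coe_add]
  have hcfk : ∀ i, c i + fk i ≤ 0 := fun i =>
    diag_nonpos ψ hmul hdiag g m hm hgm i _ (hdiagval i)
  have hfkmin : ∀ i, fmin ≤ fk i := by
    intro i
    have := hfmin (k i) i (hfk i)
    rw [hfkv i] at this
    exact_mod_cast this
  have hcup : ∀ i, c i ≤ -fmin := fun i => by linarith [hcfk i, hfkmin i]
  -- lower bound on c u
  have hclow : ∀ u, 2*fmin - 2*fmax ≤ c u := by
    intro u
    set R : Finset ι := Finset.univ.filter (fun v => ψ 1 u v ≠ ⊥ ∧ ψ 1 v u ≠ ⊥) with hR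
    have hRu : u ∈ R := by
      rw [hR, Finset.mem_filter]
      exact ⟨Finset.mem_univ u, hdne u, hdne u⟩
    have hRne : R.Nonempty := ⟨u, hRu⟩
    set γ : ℝ := R.sup' hRne c with hγ
    -- the SCC induction
    have claim : ∀ t : ℕ, 1 ≤ t → ∀ w, ψ 1 w u ≠ ⊥ →
        ψ (g ^ t) u w ≤ (((t : ℝ) * (γ + fmax) : ℝ) : Trop) := by
      intro t ht
      induction t, ht using Nat.le_induction with
      | base =>
        intro w hw
        rw [pow_one]
        by_cases hb : ψ g u w = ⊥
        · rw [hb]; exact bot_le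
        · have hfw : ψ 1 (k u) w ≠ ⊥ := by
            intro h; rw [hrow u w, h, WithBot.add_bot] at hb; exact hb rfl
          obtain ⟨a, ha⟩ := unbot' hfw
          have hafmax : a ≤ fmax := by
            have := hfmax (k u) w hfw; rw [ha] at this; exact_mod_cast this
          have hcuγ : c u ≤ γ := Finset.le_sup' c hRu
          rw [hrow u w, hc u, ha, ← WithBot.coe_add]
          rw [WithBot.coe_le_coe]
          push_cast
          linarith
      | succ t ht ih =>
        intro w hw
        rw [pow_succ, hmul]
        refine tmul_le_of _ _ fun v => ?_
        by_cases hb1 : ψ (g ^ t) u v = ⊥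
        · rw [hb1, WithBot.bot_add]; exact bot_le
        by_cases hb2 : ψ g v w = ⊥
        · rw [hb2, WithBot.add_bot]; exact bot_le
        have hFuv : ψ 1 u v ≠ ⊥ := by
          intro h; exact hb1 ((supp_pow ψ hmul g hs t ht u v).2 h)
        have hFvw : ψ 1 v w ≠ ⊥ := fun h => hb2 ((hs v w).2 h)
        have hFvu : ψ 1 v u ≠ ⊥ := htrans v w u hFvw hw
        have hvR : v ∈ R := by
          rw [hR, Finset.mem_filter]; exact ⟨Finset.mem_univ v, hFuv, hFvu⟩
        have h1 := ih v hFvu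
        -- ψ g v w ≤ γ + fmax
        have hfw : ψ 1 (k v) w ≠ ⊥ := by
          intro h; rw [hrow v w, h, WithBot.add_bot] at hb2; exact hb2 rfl
        obtain ⟨a, ha⟩ := unbot' hfw
        have hafmax : a ≤ fmax := by
          have := hfmax (k v) w hfw; rw [ha] at this; exact_mod_cast this
        have hcvγ : c v ≤ γ := Finset.le_sup' c hvR
        have h2 : ψ g v w ≤ ((γ + fmax : ℝ) : Trop) := by
          rw [hrow v w, hc v, ha, ← WithBot.coe_add, WithBot.coe_le_coe]
          linarith
        calc ψ (g ^ t) u v + ψ g v w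
            ≤ (((t : ℝ) * (γ + fmax) : ℝ) : Trop) + ((γ + fmax : ℝ) : Trop) :=
              add_le_add h1 h2
        _ = ((((t : ℕ) + 1 : ℝ) * (γ + fmax) : ℝ) : Trop) := by
              rw [← WithBot.coe_add]; congr 1; ring
        _ = (((((t + 1 : ℕ)) : ℝ) * (γ + fmax) : ℝ) : Trop) := by push_cast; ring_nf
    have h0 := claim m hm u (hdne u)
    rw [hgm, hdiag u] at h0
    have h0' : (0:ℝ) ≤ (m:ℝ) * (γ + fmax) := by exact_mod_cast h0
    have hm' : (1:ℝ) ≤ (m:ℝ) := by exact_mod_cast hm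
    have hγfmax : -fmax ≤ γ := by nlinarith
    -- witness attaining γ
    obtain ⟨v, hvR, hvγ⟩ := Finset.exists_mem_eq_sup' hRne c
    rw [hR, Finset.mem_filter] at hvR
    obtain ⟨-, hFuv, hFvu⟩ := hvR
    -- Q-edge inequality
    have hFg : tmul (ψ 1) (ψ g) = ψ g := by rw [← hmul, one_mul]
    have hedge : ψ 1 u v + ψ g v v ≤ ψ g u v := by
      conv_rhs => rw [← hFg]
      exact tmul_le _ _ _ _ _
    have hgu : ψ g u v ≠ ⊥ := fun h => hFuv ((hs u v).1 h)
    have hfkuv : ψ 1 (k u) v ≠ ⊥ := by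
      intro h; rw [hrow u v, h, WithBot.add_bot] at hgu; exact hgu rfl
    obtain ⟨fuv, hfuv⟩ := unbot' hFuv
    obtain ⟨fku, hfku⟩ := unbot' hfkuv
    rw [hrow u v, hc u, hfku, hdiagval v, hfuv, ← WithBot.coe_add, ← WithBot.coe_add,
      WithBot.coe_le_coe] at hedge
    -- reals
    have hfuvmin : fmin ≤ fuv := by
      have := hfmin u v hFuv; rw [hfuv] at this; exact_mod_cast this
    have hfkvmin : fmin ≤ fk v := hfkmin v
    have hfkumax : fku ≤ fmax := by
      have := hfmax (k u) v hfkuv; rw [hfku] at this; exact_mod_cast this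
    have hγv : γ = c v := by rw [hγ, hvγ]
    have : -fmax ≤ c v := by rw [← hγv]; exact hγfmax
    linarith
  -- final entry bounds
  intro i j hFij
  have hgij : ψ g i j ≠ ⊥ := fun h => hFij ((hs i j).1 h)
  have hfkj : ψ 1 (k i) j ≠ ⊥ := by
    intro h; rw [hrow i j, h, WithBot.add_bot] at hgij; exact hgij rfl
  obtain ⟨a, ha⟩ := unbot' hfkj
  have ha1 : fmin ≤ a := by
    have := hfmin (k i) j hfkj; rw [ha] at this; exact_mod_cast this
  have ha2 : a ≤ fmax := by
    have := hfmax (k i) j hfkj; rw [ha] at this; exact_mod_cast this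
  rw [hrow i j, hc i, ha, ← WithBot.coe_add]
  constructor
  · rw [WithBot.coe_le_coe]; linarith [hclow i]
  · rw [WithBot.coe_le_coe]; linarith [hcup i]


lemma separated (ε : ℝ)
    (hquad : ∀ i k0 j j' : ι, ∀ a b a' b' : ℝ, ψ 1 k0 j = (a : Trop) → ψ 1 i j = (b : Trop) →
       ψ 1 k0 j' = (a' : Trop) → ψ 1 i j' = (b' : Trop) →
       |(a - b) - (a' - b')| ≤ 4*ε → (a - b) = (a' - b'))
    (g : G) (m : ℕ) (hm : 1 ≤ m) (hgm : g ^ m = 1)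
    (hs : ∀ i j, ψ g i j = ⊥ ↔ ψ 1 i j = ⊥)
    (hclose : ∀ i j, ∀ x y : ℝ, ψ g i j = (x : Trop) → ψ 1 i j = (y : Trop) → |x - y| ≤ 2*ε) :
    ψ g = ψ 1 := by
  classical
  have hdne : ∀ i, ψ 1 i i ≠ ⊥ := by
    intro i; rw [hdiag i]; exact WithBot.coe_ne_bot (a := (0:ℝ))
  choose k hk hrow using row_shift ψ hmul hdiag g
  have hckne : ∀ i, ψ g i (k i) ≠ ⊥ := by
    intro i hb
    have := hk i
    rw [hb, WithBot.bot_add] at this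
    exact (WithBot.coe_ne_bot (a := (0:ℝ))) this.symm
  choose c hc using fun i => unbot' (hckne i)
  have hfk : ∀ i, ψ 1 (k i) i ≠ ⊥ := by
    intro i hb
    have hgi : ψ g i i ≠ ⊥ := fun h => hdne i ((hs i i).1 h)
    rw [hrow i i, hb, WithBot.add_bot] at hgi
    exact hgi rfl
  choose fk hfkv using fun i => unbot' (hfk i)
  -- e i = c i + fk i, and ψ g i j = ψ 1 i j + e i for all j
  refine rigid ψ hmul hdiag g m hm hgm (fun i => c i + fk i) ?_
  intro i j
  by_cases hFij : ψ 1 i j = ⊥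
  · rw [hFij, WithBot.bot_add, (hs i j).2 hFij]
  · have hgij : ψ g i j ≠ ⊥ := fun h => hFij ((hs i j).1 h)
    have hfkj : ψ 1 (k i) j ≠ ⊥ := by
      intro h; rw [hrow i j, h, WithBot.add_bot] at hgij; exact hgij rfl
    obtain ⟨a, ha⟩ := unbot' hfkj
    obtain ⟨b, hb⟩ := unbot' hFij
    -- two closeness facts
    have h1 : |(c i + a) - b| ≤ 2*ε := by
      refine hclose i j (c i + a) b ?_ hb
      rw [hrow i j, hc i, ha, ← WithBot.coe_add]
    have h2 : |(c i + fk i) - 0| ≤ 2*ε := by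
      refine hclose i i (c i + fk i) 0 ?_ ?_
      · rw [hrow i i, hc i, hfkv i, ← WithBot.coe_add]
      · rw [hdiag i]; norm_cast
    have hq : (a - b) - (fk i - 0) = 0 → a - b = fk i := by intro h; linarith
    have heq : a - b = fk i := by
      have h4 : |(a - b) - (fk i - 0)| ≤ 4*ε := by
        have : (a - b) - (fk i - 0) = ((c i + a) - b) - ((c i + fk i) - 0) := by ring
        rw [this]
        calc |((c i + a) - b) - ((c i + fk i) - 0)|
            ≤ |(c i + a) - b| + |(c i + fk i) - 0| := abs_sub _ _
        _ ≤ 2*ε + 2*ε := add_le_add h1 h2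
        _ = 4*ε := by ring
      have := hquad i (k i) j i a b (fk i) 0 ha hb (hfkv i) (by rw [hdiag i]; norm_cast) h4
      linarith
    rw [hrow i j, hc i, ha, hb, ← WithBot.coe_add, ← WithBot.coe_add, WithBot.coe_eq_coe]
    show c i + a = b + (c i + fk i)
    linarith


omit hmul hdiag in
lemma close_mul_left (L X Y : ι → ι → Trop) (ep : ℝ)
    (hcl : ∀ k j, X k j ≤ Y k j + (ep : Trop)) :
    ∀ i j, tmul L X i j ≤ tmul L Y i j + (ep : Trop) := by
  intro i j
  refine tmul_le_of _ _ fun k => ?_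
  calc L i k + X k j ≤ L i k + (Y k j + (ep : Trop)) := add_le_add_right (hcl k j) _
  _ = (L i k + Y k j) + (ep : Trop) := (add_assoc _ _ _).symm
  _ ≤ tmul L Y i j + (ep : Trop) := add_le_add_left (tmul_le _ _ _ _ _) _

theorem abstract_finite (hinj : Function.Injective ψ)
    (hper : ∀ g : G, IsOfFinOrder g) : Finite G := by
  classical
  have htor : ∀ g : G, ∃ m : ℕ, 1 ≤ m ∧ g ^ m = 1 := by
    intro g
    obtain ⟨m, hm, h⟩ := isOfFinOrder_iff_pow_eq_one.1 (hper g)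
    exact ⟨m, hm, h⟩
  rcases isEmpty_or_nonempty ι with hι | hι
  · have hsub : Subsingleton (ι → ι → Trop) :=
      ⟨fun a b => funext fun i => (IsEmpty.false i).elim⟩
    have : Subsingleton G := ⟨fun a b => hinj (Subsingleton.elim _ _)⟩
    exact Finite.of_subsingleton
  -- nonempty case
  obtain ⟨i0⟩ := hι
  have hdne : ∀ i, ψ 1 i i ≠ ⊥ := by
    intro i; rw [hdiag i]; exact WithBot.coe_ne_bot (a := (0:ℝ))
  set val : Trop → ℝ := fun x => WithBot.unbotD 0 x with hval
  have hvalcoe : ∀ (r : ℝ), val ((r : ℝ) : Trop) = r := fun r => rfl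
  have hcoeval : ∀ {x : Trop}, x ≠ ⊥ → ((val x : ℝ) : Trop) = x := by
    intro x hx
    obtain ⟨r, hr⟩ := unbot' hx
    rw [hr]; rfl
  set P : Finset (ι × ι) := Finset.univ.filter (fun p => ψ 1 p.1 p.2 ≠ ⊥) with hP
  have hPne : P.Nonempty := by
    refine ⟨(i0, i0), ?_⟩
    rw [hP, Finset.mem_filter]
    exact ⟨Finset.mem_univ _, hdne i0⟩
  set fmax : ℝ := P.sup' hPne (fun p => val (ψ 1 p.1 p.2)) with hfmaxdef
  set fmin : ℝ := P.inf' hPne (fun p => val (ψ 1 p.1 p.2)) with hfmindef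
  have hfmin : ∀ i j, ψ 1 i j ≠ ⊥ → ((fmin : ℝ) : Trop) ≤ ψ 1 i j := by
    intro i j hij
    have hmem : (i, j) ∈ P := by rw [hP, Finset.mem_filter]; exact ⟨Finset.mem_univ _, hij⟩
    have := Finset.inf'_le (fun p => val (ψ 1 p.1 p.2)) hmem
    rw [← hcoeval hij]
    exact_mod_cast this
  have hfmax : ∀ i j, ψ 1 i j ≠ ⊥ → ψ 1 i j ≤ ((fmax : ℝ) : Trop) := by
    intro i j hij
    have hmem : (i, j) ∈ P := by rw [hP, Finset.mem_filter]; exact ⟨Finset.mem_univ _, hij⟩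
    have := Finset.le_sup' (fun p => val (ψ 1 p.1 p.2)) hmem
    rw [← hcoeval hij]
    exact_mod_cast this
  -- epsilon
  set qv : ι × ι × ι × ι → ℝ := fun x =>
    (val (ψ 1 x.2.1 x.2.2.1) - val (ψ 1 x.1 x.2.2.1)) -
    (val (ψ 1 x.2.1 x.2.2.2) - val (ψ 1 x.1 x.2.2.2)) with hqv
  set Pos : Finset ℝ := (Finset.image qv Finset.univ).filter (fun v => 0 < v) with hPos
  set ε : ℝ := if h : Pos.Nonempty then Pos.min' h / 5 else 1 with hεdef
  have hε : 0 < ε := by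
    rw [hεdef]
    split_ifs with h
    · have h2 := Finset.mem_filter.1 (Pos.min'_mem h)
      linarith [h2.2]
    · norm_num
  have hquad : ∀ i k0 j j' : ι, ∀ a b a' b' : ℝ, ψ 1 k0 j = (a : Trop) → ψ 1 i j = (b : Trop) →
      ψ 1 k0 j' = (a' : Trop) → ψ 1 i j' = (b' : Trop) →
      |(a - b) - (a' - b')| ≤ 4*ε → (a - b) = (a' - b') := by
    intro i k0 j j' a b a' b' ha hb ha' hb' habs
    set v : ℝ := (a - b) - (a' - b') with hv
    have hv1 : v ∈ Finset.image qv Finset.univ := by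
      rw [Finset.mem_image]
      refine ⟨(i, k0, j, j'), Finset.mem_univ _, ?_⟩
      show (val (ψ 1 k0 j) - val (ψ 1 i j)) - (val (ψ 1 k0 j') - val (ψ 1 i j')) = v
      rw [ha, hb, ha', hb', hvalcoe, hvalcoe, hvalcoe, hvalcoe, hv]
    have hv2 : -v ∈ Finset.image qv Finset.univ := by
      rw [Finset.mem_image]
      refine ⟨(i, k0, j', j), Finset.mem_univ _, ?_⟩
      show (val (ψ 1 k0 j') - val (ψ 1 i j')) - (val (ψ 1 k0 j) - val (ψ 1 i j)) = -v
      rw [ha, hb, ha', hb', hvalcoe, hvalcoe, hvalcoe, hvalcoe, hv]; ring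
    by_contra hne
    have hvne : v ≠ 0 := fun h0 => hne (by rw [hv] at h0; linarith)
    have hup : ∀ w, w ∈ Pos → Pos.Nonempty → 5 * ε ≤ w := by
      intro w hw hne'
      have h1 : Pos.min' hne' ≤ w := Finset.min'_le _ _ hw
      rw [hεdef, dif_pos hne']
      linarith
    rcases lt_or_gt_of_ne hvne with hneg | hpos
    · have hmem : -v ∈ Pos := by
        rw [hPos, Finset.mem_filter]; exact ⟨hv2, by linarith⟩
      have h5 := hup (-v) hmem ⟨-v, hmem⟩
      have : |v| = -v := abs_of_neg hneg
      linarith [habs, this.symm.trans_le (le_refl _), hε]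
    · have hmem : v ∈ Pos := by
        rw [hPos, Finset.mem_filter]; exact ⟨hv1, by linarith⟩
      have h5 := hup v hmem ⟨v, hmem⟩
      have : |v| = v := abs_of_pos hpos
      linarith
  -- pattern and representatives
  set pattern : G → ι → ι → Bool := fun g i j => decide (ψ g i j = ⊥) with hpatdef
  have patiff : ∀ {x y : G}, pattern x = pattern y → ∀ i j, (ψ x i j = ⊥ ↔ ψ y i j = ⊥) := by
    intro x y hxy i j
    have h2 : pattern x i j = pattern y i j := congrFun (congrFun hxy i) j
    have h3 : decide (ψ x i j = ⊥) = decide (ψ y i j = ⊥) := h2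
    exact decide_eq_decide.1 h3
  have hGne : Nonempty G := ⟨1⟩
  set rep : G → G := fun g => Function.invFun pattern (pattern g) with hrepdef
  have hrepeq : ∀ g, pattern (rep g) = pattern g := by
    intro g
    show pattern (Function.invFun pattern (pattern g)) = pattern g
    exact Function.invFun_eq ⟨g, rfl⟩
  have hsuppN : ∀ g0 g : G, (∀ i j, ψ g0 i j = ⊥ ↔ ψ g i j = ⊥) →
      ∀ i j, (ψ (g0⁻¹ * g) i j = ⊥ ↔ ψ 1 i j = ⊥) := by
    intro g0 g hsame i j
    rw [hmul g0⁻¹ g]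
    rw [supp_tmul_congr (fun _ _ => Iff.rfl) (fun i j => (hsame i j).symm) i j]
    rw [← hmul, inv_mul_cancel]
  set lo : ℝ := 3*fmin - 2*fmax with hlodef
  set hi : ℝ := fmax - fmin with hhidef
  set Z : ℕ := ⌈(hi - lo)/ε⌉₊ with hZdef
  set gridfn : ℝ → Fin (Z+1) :=
    fun x => ⟨min ⌊(x - lo)/ε⌋₊ Z, Nat.lt_succ_of_le (min_le_right _ _)⟩ with hgridfndef
  set grid : G → ι → ι → Option (Fin (Z+1)) := fun g i j =>
    if ψ g i j = ⊥ then none else some (gridfn (val (ψ g i j))) with hgriddef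
  set Θ : G → (ι → ι → Bool) × (ι → ι → Option (Fin (Z+1))) :=
    fun g => (pattern g, grid ((rep g)⁻¹ * g)) with hΘdef
  have hΘinj : Function.Injective Θ := by
    intro g g' hgg
    have h1 : pattern g = pattern g' := congrArg Prod.fst hgg
    have h2 : grid ((rep g)⁻¹ * g) = grid ((rep g')⁻¹ * g') := congrArg Prod.snd hgg
    have hg0eq : rep g = rep g' := by
      show Function.invFun pattern (pattern g) = Function.invFun pattern (pattern g')
      rw [h1]
    rw [← hg0eq] at h2
    set g0 : G := rep g with hg0
    have hp0 : pattern g0 = pattern g := hrepeq g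
    have hp0' : pattern g0 = pattern g' := hp0.trans h1
    have hsh : ∀ i j, ψ (g0⁻¹ * g) i j = ⊥ ↔ ψ 1 i j = ⊥ := hsuppN g0 g (patiff hp0)
    have hsh' : ∀ i j, ψ (g0⁻¹ * g') i j = ⊥ ↔ ψ 1 i j = ⊥ := hsuppN g0 g' (patiff hp0')
    obtain ⟨m, hm, hgm⟩ := htor (g0⁻¹ * g)
    obtain ⟨m', hm', hgm'⟩ := htor (g0⁻¹ * g')
    have hb := entry_bounds ψ hmul hdiag fmin fmax hfmin hfmax (g0⁻¹*g) m hm hgm hsh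
    have hb' := entry_bounds ψ hmul hdiag fmin fmax hfmin hfmax (g0⁻¹*g') m' hm' hgm' hsh'
    have hclose2 : ∀ i j, (ψ (g0⁻¹*g') i j ≤ ψ (g0⁻¹*g) i j + (ε:Trop)) ∧
        (ψ (g0⁻¹*g) i j ≤ ψ (g0⁻¹*g') i j + (ε:Trop)) := by
      intro i j
      by_cases hFij : ψ 1 i j = ⊥
      · rw [(hsh i j).2 hFij, (hsh' i j).2 hFij, WithBot.bot_add]
        exact ⟨le_refl _, le_refl _⟩
      · have hne1 : ψ (g0⁻¹*g) i j ≠ ⊥ := fun hh => hFij ((hsh i j).1 hh)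
        have hne2 : ψ (g0⁻¹*g') i j ≠ ⊥ := fun hh => hFij ((hsh' i j).1 hh)
        obtain ⟨x, hx⟩ := unbot' hne1
        obtain ⟨x', hx'⟩ := unbot' hne2
        have hge : (if ψ (g0⁻¹*g) i j = ⊥ then (none : Option (Fin (Z+1)))
              else some (gridfn (val (ψ (g0⁻¹*g) i j))))
            = (if ψ (g0⁻¹*g') i j = ⊥ then none else some (gridfn (val (ψ (g0⁻¹*g') i j)))) :=
          congrFun (congrFun h2 i) j
        rw [if_neg hne1, if_neg hne2] at hge
        have hge2 : gridfn (val (ψ (g0⁻¹*g) i j)) = gridfn (val (ψ (g0⁻¹*g') i j)) :=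
          Option.some.inj hge
        rw [hx, hx', hvalcoe, hvalcoe] at hge2
        -- bounds
        have hbx := hb i j hFij
        rw [hx] at hbx
        have hbx1 : lo ≤ x := by exact_mod_cast hbx.1
        have hbx2 : x ≤ hi := by exact_mod_cast hbx.2
        have hbx' := hb' i j hFij
        rw [hx'] at hbx'
        have hbx'1 : lo ≤ x' := by exact_mod_cast hbx'.1
        have hbx'2 : x' ≤ hi := by exact_mod_cast hbx'.2
        -- min clamps are identities
        have hfl : ∀ y : ℝ, lo ≤ y → y ≤ hi → ⌊(y - lo)/ε⌋₊ ≤ Z := by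
          intro y hy1 hy2
          calc ⌊(y - lo)/ε⌋₊ ≤ ⌊(hi - lo)/ε⌋₊ :=
                Nat.floor_mono (by gcongr <;> linarith)
          _ ≤ ⌈(hi - lo)/ε⌉₊ := Nat.floor_le_ceil _
        have hminx : min ⌊(x - lo)/ε⌋₊ Z = ⌊(x - lo)/ε⌋₊ := min_eq_left (hfl x hbx1 hbx2)
        have hminx' : min ⌊(x' - lo)/ε⌋₊ Z = ⌊(x' - lo)/ε⌋₊ := min_eq_left (hfl x' hbx'1 hbx'2)
        have hfleq : ⌊(x - lo)/ε⌋₊ = ⌊(x' - lo)/ε⌋₊ := by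
          have := congrArg Fin.val hge2
          simp only [hgridfndef] at this
          rw [hminx, hminx'] at this
          exact this
        -- deduce |x - x'| < ε
        have ha0 : (0:ℝ) ≤ (x - lo)/ε := div_nonneg (by linarith) (le_of_lt hε)
        have hb0 : (0:ℝ) ≤ (x' - lo)/ε := div_nonneg (by linarith) (le_of_lt hε)
        have l1 : ((⌊(x - lo)/ε⌋₊ : ℕ) : ℝ) ≤ (x - lo)/ε := Nat.floor_le ha0
        have l2 : (x - lo)/ε < (⌊(x - lo)/ε⌋₊ : ℕ) + 1 := Nat.lt_floor_add_one _
        have l3 : ((⌊(x' - lo)/ε⌋₊ : ℕ) : ℝ) ≤ (x' - lo)/ε := Nat.floor_le hb0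
        have l4 : (x' - lo)/ε < (⌊(x' - lo)/ε⌋₊ : ℕ) + 1 := Nat.lt_floor_add_one _
        rw [hfleq] at l1 l2
        have hd1 : (x - lo)/ε - (x' - lo)/ε < 1 := by linarith
        have hd2 : (x' - lo)/ε - (x - lo)/ε < 1 := by linarith
        have he1 : x - x' ≤ ε := by
          have : (x - lo)/ε - (x' - lo)/ε = (x - x')/ε := by ring
          rw [this] at hd1
          have := (div_lt_one hε).1 hd1
          linarith
        have he2 : x' - x ≤ ε := by
          have : (x' - lo)/ε - (x - lo)/ε = (x' - x)/ε := by ring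
          rw [this] at hd2
          have := (div_lt_one hε).1 hd2
          linarith
        constructor
        · rw [hx, hx', ← WithBot.coe_add, WithBot.coe_le_coe]; linarith
        · rw [hx, hx', ← WithBot.coe_add, WithBot.coe_le_coe]; linarith
    -- pass to C = g⁻¹ g'
    have hCform : ((g0⁻¹*g)⁻¹ * (g0⁻¹ * g')) = g⁻¹ * g' := by group
    have hsC : ∀ i j, ψ (g⁻¹ * g') i j = ⊥ ↔ ψ 1 i j = ⊥ := hsuppN g g' (patiff h1)
    obtain ⟨mc, hmc, hgmc⟩ := htor (g⁻¹ * g')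
    have hCle : ∀ i j, ψ (g⁻¹ * g') i j ≤ ψ 1 i j + (ε:Trop) := by
      intro i j
      have h5 := close_mul_left (ψ (g0⁻¹*g)⁻¹) (ψ (g0⁻¹*g')) (ψ (g0⁻¹*g)) ε
        (fun k j => (hclose2 k j).1) i j
      rw [← hmul, ← hmul, hCform, inv_mul_cancel] at h5
      exact h5
    have h1le : ∀ i j, ψ 1 i j ≤ ψ (g⁻¹ * g') i j + (ε:Trop) := by
      intro i j
      have h5 := close_mul_left (ψ (g0⁻¹*g)⁻¹) (ψ (g0⁻¹*g)) (ψ (g0⁻¹*g')) ε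
        (fun k j => (hclose2 k j).2) i j
      rw [← hmul, ← hmul, hCform, inv_mul_cancel] at h5
      exact h5
    have hcl : ∀ i j, ∀ x y : ℝ, ψ (g⁻¹*g') i j = (x:Trop) → ψ 1 i j = (y:Trop) → |x - y| ≤ 2*ε := by
      intro i j x y hx hy
      have a1 := hCle i j
      rw [hx, hy, ← WithBot.coe_add, WithBot.coe_le_coe] at a1
      have a2 := h1le i j
      rw [hx, hy, ← WithBot.coe_add, WithBot.coe_le_coe] at a2
      rw [abs_le]; constructor <;> linarith
    have hsep := separated ψ hmul hdiag ε hquad (g⁻¹*g') mc hmc hgmc hsC hcl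
    have hC1 : g⁻¹ * g' = 1 := hinj (by rw [hsep])
    exact inv_mul_eq_one.1 hC1
  exact Finite.of_injective Θ hΘinj


end
end Group

theorem finite_of_periodic_tropical_rep' {n : ℕ}
    (G : Type*) [Group G] (hper : ∀ g : G, IsOfFinOrder g)
    (φ : G → Matrix (Fin n) (Fin n) Trop)
    (hinj : Function.Injective φ)
    (hmul : ∀ g h : G, φ (g * h) = tropMulMat (φ g) (φ h)) :
    Finite G := by
  classical
  have hmul' : ∀ g h : G, φ (g * h) = tmul (φ g) (φ h) := hmul
  have hE : tmul (φ 1) (φ 1) = φ 1 := by rw [← hmul', one_mul]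
  have hrowE : ∀ g, tmul (φ g) (φ 1) = φ g := by intro g; rw [← hmul', mul_one]
  have hcolE : ∀ g, tmul (φ 1) (φ g) = φ g := by intro g; rw [← hmul', one_mul]
  have h3 : ∀ g, φ g = tmul (tmul (φ 1) (φ g)) (φ 1) := by
    intro g; rw [hcolE, hrowE]
  set ψ : G → {i : Fin n // φ 1 i i = 0} → {i : Fin n // φ 1 i i = 0} → Trop :=
    fun g d d' => φ g d.1 d'.1 with hψdef
  have hψdiag : ∀ d, ψ 1 d d = 0 := fun d => d.2
  -- reconstruction
  have hrecon : ∀ (g : G) (i j : Fin n), φ g i j =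
      Finset.univ.sup (fun t : {i : Fin n // φ 1 i i = 0} =>
        Finset.univ.sup (fun s : {i : Fin n // φ 1 i i = 0} =>
          (φ 1 i t.1 + φ g t.1 s.1) + φ 1 s.1 j)) := by
    intro g i j
    have expand : φ g i j = Finset.univ.sup (fun l =>
        Finset.univ.sup (fun k => (φ 1 i k + φ g k l) + φ 1 l j)) := by
      conv_lhs => rw [h3 g]
      show Finset.univ.sup (fun l => tmul (φ 1) (φ g) i l + φ 1 l j) = _
      congr 1; funext l
      rw [show tmul (φ 1) (φ g) i l = Finset.univ.sup (fun k => φ 1 i k + φ g k l) from rfl,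
        sup_add]
    refine le_antisymm ?_ ?_
    · rw [expand]
      refine Finset.sup_le fun l _ => Finset.sup_le fun k _ => ?_
      by_cases hik : φ 1 i k = ⊥
      · rw [hik, WithBot.bot_add, WithBot.bot_add]; exact bot_le
      by_cases hlj : φ 1 l j = ⊥
      · rw [hlj, WithBot.add_bot]; exact bot_le
      obtain ⟨t0, ht0d, ht0eq⟩ := diag_witness hE hik
      obtain ⟨s0, hs0d, hs0eq⟩ := diag_witness hE hlj
      have hre : (φ 1 i k + φ g k l) + φ 1 l j
          = (φ 1 i t0 + ((φ 1 t0 k + φ g k l) + φ 1 l s0)) + φ 1 s0 j := by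
        rw [← ht0eq, ← hs0eq]; abel
      rw [hre]
      have hinner : (φ 1 t0 k + φ g k l) + φ 1 l s0 ≤ φ g t0 s0 := by
        calc (φ 1 t0 k + φ g k l) + φ 1 l s0
            ≤ tmul (φ 1) (φ g) t0 l + φ 1 l s0 :=
              add_le_add_left (tmul_le _ _ _ _ _) _
        _ ≤ tmul (tmul (φ 1) (φ g)) (φ 1) t0 s0 := tmul_le _ _ _ _ _
        _ = φ g t0 s0 := by rw [← h3 g]
      have hterm : (φ 1 i t0 + ((φ 1 t0 k + φ g k l) + φ 1 l s0)) + φ 1 s0 j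
          ≤ (φ 1 i t0 + φ g t0 s0) + φ 1 s0 j :=
        add_le_add_left (add_le_add_right hinner _) _
      refine le_trans hterm ?_
      have hm1 : ((φ 1 i t0 + φ g t0 s0) + φ 1 s0 j) ≤ Finset.univ.sup
          (fun s : {i : Fin n // φ 1 i i = 0} =>
            (φ 1 i t0 + φ g t0 s.1) + φ 1 s.1 j) :=
        Finset.le_sup (f := fun s : {i : Fin n // φ 1 i i = 0} =>
          (φ 1 i t0 + φ g t0 s.1) + φ 1 s.1 j) (Finset.mem_univ ⟨s0, hs0d⟩)
      refine le_trans hm1 ?_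
      exact Finset.le_sup (f := fun t : {i : Fin n // φ 1 i i = 0} =>
        Finset.univ.sup (fun s : {i : Fin n // φ 1 i i = 0} =>
          (φ 1 i t.1 + φ g t.1 s.1) + φ 1 s.1 j)) (Finset.mem_univ ⟨t0, ht0d⟩)
    · refine Finset.sup_le fun t _ => Finset.sup_le fun s _ => ?_
      calc (φ 1 i t.1 + φ g t.1 s.1) + φ 1 s.1 j
          ≤ tmul (φ 1) (φ g) i s.1 + φ 1 s.1 j := add_le_add_left (tmul_le _ _ _ _ _) _
      _ ≤ tmul (tmul (φ 1) (φ g)) (φ 1) i j := tmul_le _ _ _ _ _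
      _ = φ g i j := by rw [← h3 g]
  have hψinj : Function.Injective ψ := by
    intro g g' hgg
    apply hinj
    funext i j
    rw [hrecon g i j, hrecon g' i j]
    congr 1; funext t; congr 1; funext s
    have : ψ g t s = ψ g' t s := by rw [hgg]
    rw [hψdef] at this
    simp only at this
    rw [this]
  have hψmul : ∀ g h : G, ψ (g * h) = tmul (ψ g) (ψ h) := by
    intro g h
    funext d d'
    refine le_antisymm ?_ ?_
    · -- φ (gh) d d' ≤ sup over D
      have hgh : φ (g * h) = tmul (φ g) (tmul (φ 1) (φ h)) := by rw [hcolE, hmul']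
      have expand : φ (g * h) d.1 d'.1 = Finset.univ.sup (fun k =>
          Finset.univ.sup (fun l => φ g d.1 k + (φ 1 k l + φ h l d'.1))) := by
        rw [hgh]
        show Finset.univ.sup (fun k => φ g d.1 k + tmul (φ 1) (φ h) k d'.1) = _
        congr 1; funext k
        rw [show tmul (φ 1) (φ h) k d'.1
          = Finset.univ.sup (fun l => φ 1 k l + φ h l d'.1) from rfl, add_sup]
      show φ (g * h) d.1 d'.1 ≤ _
      rw [expand]
      refine Finset.sup_le fun k _ => Finset.sup_le fun l _ => ?_
      by_cases hkl : φ 1 k l = ⊥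
      · rw [hkl, WithBot.bot_add, WithBot.add_bot]; exact bot_le
      obtain ⟨t0, ht0d, ht0eq⟩ := diag_witness hE hkl
      have hre : φ g d.1 k + (φ 1 k l + φ h l d'.1)
          = (φ g d.1 k + φ 1 k t0) + (φ 1 t0 l + φ h l d'.1) := by
        rw [← ht0eq]; abel
      rw [hre]
      have hstep : (φ g d.1 k + φ 1 k t0) + (φ 1 t0 l + φ h l d'.1)
          ≤ φ g d.1 t0 + φ h t0 d'.1 := by
        have u1 : φ g d.1 k + φ 1 k t0 ≤ φ g d.1 t0 := by
          calc φ g d.1 k + φ 1 k t0 ≤ tmul (φ g) (φ 1) d.1 t0 := tmul_le _ _ _ _ _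
          _ = φ g d.1 t0 := by rw [hrowE]
        have u2 : φ 1 t0 l + φ h l d'.1 ≤ φ h t0 d'.1 := by
          calc φ 1 t0 l + φ h l d'.1 ≤ tmul (φ 1) (φ h) t0 d'.1 := tmul_le _ _ _ _ _
          _ = φ h t0 d'.1 := by rw [hcolE]
        exact add_le_add u1 u2
      refine le_trans hstep ?_
      exact Finset.le_sup (f := fun t : {i : Fin n // φ 1 i i = 0} =>
        ψ g d t + ψ h t d') (Finset.mem_univ ⟨t0, ht0d⟩)
    · refine Finset.sup_le fun t _ => ?_
      show ψ g d t + ψ h t d' ≤ φ (g * h) d.1 d'.1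
      calc ψ g d t + ψ h t d' = φ g d.1 t.1 + φ h t.1 d'.1 := rfl
      _ ≤ tmul (φ g) (φ h) d.1 d'.1 := tmul_le _ _ _ _ _
      _ = φ (g * h) d.1 d'.1 := by rw [hmul' g h]
  exact abstract_finite ψ hψmul hψdiag hψinj hper

end TP

theorem finite_of_periodic_tropical_rep {n : ℕ}
    (G : Type*) [Group G] (hper : ∀ g : G, IsOfFinOrder g)
    (φ : G → Matrix (Fin n) (Fin n) Trop)
    (hinj : Function.Injective φ)
    (hmul : ∀ g h : G, φ (g * h) = tropMulMat (φ g) (φ h)) :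
    Finite G := by
  exact TP.finite_of_periodic_tropical_rep' G hper φ hinj hmul
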